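/- Let M ≥ 3 be an integer, let 0 < ε ≤ 1 and let t ≥ ε. Then there exists a finite collection 𝒱 of unit vectors in ℝ^M such that (a) |𝒱| ≤ (1 + ε^{-1})^{(M−1)/2} · 4^{M−1}, and (b) A(𝒱, t/(1+ε)) ⊆ B_t ⊆ A(𝒱, t), where B_t denotes the closed Euclidean ball of radius t centered at the origin in ℝ^M. -/

import Mathlib

open MeasureTheory Real Finset Metric

noncomputable section

/-- The Euclidean dot product on `ℝ^M`. -/
def edot {M : ℕ} (v w : Fin M → ℝ) : ℝ := ∑ i, v i * w i

/-- The closed Euclidean ball of radius `t` centered at the origin in `ℝ^M`. -/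
def eball (M : ℕ) (t : ℝ) : Set (Fin M → ℝ) := {w | Real.sqrt (∑ i, w i ^ 2) ≤ t}

/-- `A(𝒱, s) = {w : vᵀw ≤ s for all v ∈ 𝒱}`. -/
def epoly {M : ℕ} (𝒱 : Finset (Fin M → ℝ)) (s : ℝ) : Set (Fin M → ℝ) :=
  {w | ∀ v ∈ 𝒱, edot v w ≤ s}



lemma aux_num : ∀ M : ℕ, 3 ≤ M → 2*(3/2:ℝ)^M ≤ (2*Real.sqrt 2)^(M-1) := by
  intro M hM
  induction M, hM using Nat.le_induction with
  | base =>
    have h2 : (Real.sqrt 2)^2 = 2 := Real.sq_sqrt (by norm_num)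
    norm_num
    nlinarith [h2]
  | succ n hn ih =>
    have hs : (1:ℝ) ≤ Real.sqrt 2 := by
      rw [show (1:ℝ) = Real.sqrt 1 by simp]
      exact Real.sqrt_le_sqrt (by norm_num)
    have hpos : (0:ℝ) ≤ (2*Real.sqrt 2)^(n-1) := by positivity
    have hstep : ((2:ℝ)*Real.sqrt 2)^(n+1-1) = (2*Real.sqrt 2)^(n-1) * (2*Real.sqrt 2) := by
      rw [show n+1-1 = (n-1)+1 by omega, pow_succ]
    rw [hstep]
    calc 2*(3/2:ℝ)^(n+1) = (2*(3/2)^n) * (3/2) := by ring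
    _ ≤ (2*Real.sqrt 2)^(n-1) * (3/2) := by nlinarith
    _ ≤ (2*Real.sqrt 2)^(n-1) * (2*Real.sqrt 2) := by nlinarith

lemma binom_diff (r : ℝ) (M : ℕ) :
    (1+r)^M - (1-r)^M = ∑ k ∈ Finset.range (M+1), (r^k - (-r)^k) * (M.choose k) := by
  rw [show (1+r) = r+1 by ring, show (1-r) = -r+1 by ring, add_pow, add_pow,
    ← Finset.sum_sub_distrib]
  exact Finset.sum_congr rfl fun k _ => by ring

lemma term_le (r : ℝ) (hr : 0 < r) (hr2 : r ≤ 1/2) (k : ℕ) :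
    r^k - (-r)^k ≤ 2*r*((1/2:ℝ)^k - (-1/2:ℝ)^k) := by
  rw [show (-1/2:ℝ) = -(1/2:ℝ) by norm_num]
  rcases Nat.even_or_odd k with he | ho
  · rw [he.neg_pow, he.neg_pow]; simp
  · rw [ho.neg_pow, ho.neg_pow]
    obtain ⟨j, rfl⟩ : ∃ j, k = j + 1 := ⟨k-1, by rcases ho with ⟨m, rfl⟩; omega⟩
    have : r^(j+1) = r * r^j := by ring
    have hj : r^j ≤ (1/2:ℝ)^j := pow_le_pow_left₀ hr.le hr2 j
    have : (2:ℝ)*r*((1/2)^(j+1) - -(1/2:ℝ)^(j+1)) = 2*r*(1/2:ℝ)^j := by ring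
    rw [this]
    nlinarith [pow_pos hr j]

lemma diff_le (r : ℝ) (hr : 0 < r) (hr2 : r ≤ 1/2) (M : ℕ) (hM : 3 ≤ M) :
    (1+r)^M - (1-r)^M ≤ r * (2*Real.sqrt 2)^(M-1) := by
  have h1 : (1+r)^M - (1-r)^M ≤ 2*r*((3/2:ℝ)^M - (1/2:ℝ)^M) := by
    have e2 : (3/2:ℝ)^M - (1/2:ℝ)^M = ∑ k ∈ Finset.range (M+1), ((1/2:ℝ)^k - (-(1/2):ℝ)^k) * (M.choose k) := by
      have := binom_diff (1/2 : ℝ) M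
      norm_num at this ⊢
      linarith [this]
    rw [binom_diff r M, e2, Finset.mul_sum]
    refine Finset.sum_le_sum fun k _ => ?_
    have := term_le r hr hr2 k
    have hc : (0:ℝ) ≤ (M.choose k : ℝ) := by positivity
    calc (r^k - (-r)^k) * (M.choose k) ≤ (2*r*((1/2:ℝ)^k - (-1/2:ℝ)^k)) * (M.choose k) := by
          nlinarith
      _ = 2*r*(((1/2:ℝ)^k - (-(1/2):ℝ)^k) * (M.choose k)) := by norm_num; ring
  have h2 := aux_num M hM
  have h3 : (0:ℝ) < (1/2:ℝ)^M := by positivity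
  nlinarith




lemma packing (M : ℕ) (hM : 3 ≤ M) {r : ℝ} (hr : 0 < r) (hr2 : r ≤ 1/2)
    (T : Finset (EuclideanSpace ℝ (Fin M))) (h1 : ∀ v ∈ T, ‖v‖ = 1)
    (hsep : ∀ v ∈ T, ∀ w ∈ T, v ≠ w → 2*r < dist v w) :
    (T.card : ℝ) ≤ (2*Real.sqrt 2 / r)^(M-1) := by
  haveI : Nonempty (Fin M) := ⟨⟨0, by omega⟩⟩
  haveI : Nontrivial (EuclideanSpace ℝ (Fin M)) := by
    apply Module.nontrivial_of_finrank_pos (R := ℝ)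
    rw [finrank_euclideanSpace]; simp; omega
  set μ : Measure (EuclideanSpace ℝ (Fin M)) := volume with hμ
  have hfr : Module.finrank ℝ (EuclideanSpace ℝ (Fin M)) = M := by
    rw [finrank_euclideanSpace]; simp
  set κ := μ (ball (0:EuclideanSpace ℝ (Fin M)) 1) with hκ
  have hκpos : 0 < κ := measure_ball_pos μ _ one_pos
  have hκfin : κ < ⊤ := measure_ball_lt_top
  have hdisj : (↑T : Set (EuclideanSpace ℝ (Fin M))).PairwiseDisjoint (fun v => ball v r) := by
    intro v hv w hw hvw
    apply ball_disjoint_ball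
    linarith [hsep v hv w hw hvw]
  have hsum : μ (⋃ v ∈ T, ball v r) = ∑ v ∈ T, μ (ball v r) :=
    measure_biUnion_finset hdisj (fun v _ => measurableSet_ball)
  have hballvol : ∀ v ∈ T, μ (ball v r) = ENNReal.ofReal (r^M) * κ := by
    intro v _
    rw [Measure.addHaar_ball μ v hr.le, hfr]
  have hannsub : (⋃ v ∈ T, ball v r) ⊆ ball (0:EuclideanSpace ℝ (Fin M)) (1+r) := by
    intro x hx
    simp only [Set.mem_iUnion] at hx
    obtain ⟨v, hv, hxv⟩ := hx
    rw [mem_ball] at *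
    have h1v : dist v 0 = 1 := by rw [dist_zero_right]; exact h1 v hv
    calc dist x 0 ≤ dist x v + dist v 0 := dist_triangle _ _ _
      _ < r + 1 := by rw [h1v]; linarith
      _ = 1 + r := by ring
  have hanndisj : Disjoint (⋃ v ∈ T, ball v r) (closedBall (0:EuclideanSpace ℝ (Fin M)) (1-r)) := by
    rw [Set.disjoint_right]
    intro x hx hx2
    simp only [Set.mem_iUnion] at hx2
    obtain ⟨v, hv, hxv⟩ := hx2
    rw [mem_ball] at hxv
    rw [mem_closedBall] at hx
    have h1v : dist v 0 = 1 := by rw [dist_zero_right]; exact h1 v hv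
    have htri := dist_triangle v x (0:EuclideanSpace ℝ (Fin M))
    rw [dist_comm v x] at htri
    linarith [h1v ▸ htri]
  have key : μ (⋃ v ∈ T, ball v r) + μ (closedBall (0:EuclideanSpace ℝ (Fin M)) (1-r))
      ≤ μ (ball (0:EuclideanSpace ℝ (Fin M)) (1+r)) := by
    rw [← measure_union hanndisj measurableSet_closedBall]
    apply measure_mono
    exact Set.union_subset hannsub (closedBall_subset_ball (by linarith))
  rw [hsum, Finset.sum_congr rfl hballvol, Finset.sum_const, nsmul_eq_mul] at key
  rw [Measure.addHaar_ball μ _ (by linarith : (0:ℝ) ≤ 1+r), hfr,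
    Measure.addHaar_closedBall μ _ (by linarith : (0:ℝ) ≤ 1-r), hfr, ← hκ] at key
  have keyR : ((T.card : ℝ) * r^M + (1-r)^M) ≤ (1+r)^M := by
    have e1 : (T.card : ENNReal) * (ENNReal.ofReal (r^M) * κ) + ENNReal.ofReal ((1-r)^M) * κ
        = ENNReal.ofReal ((T.card : ℝ) * r^M + (1-r)^M) * κ := by
      rw [ENNReal.ofReal_add (by positivity) (pow_nonneg (by linarith) M), ENNReal.ofReal_mul (by positivity)]
      rw [ENNReal.ofReal_natCast]
      ring
    rw [e1] at key
    have := (ENNReal.mul_le_mul_iff_left hκpos.ne' hκfin.ne).mp key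
    rw [ENNReal.ofReal_le_ofReal_iff (by positivity)] at this
    exact this
  have hdiff := diff_le r hr hr2 M hM
  have hcard : (T.card : ℝ) * r^M ≤ r * (2*Real.sqrt 2)^(M-1) := by linarith
  have hrM : r^M = r * r^(M-1) := by
    calc r^M = r^((M-1)+1) := by congr 1; omega
      _ = r * r^(M-1) := by ring
  rw [hrM] at hcard
  have hrpow : (0:ℝ) < r^(M-1) := by positivity
  have h5 : r * ((T.card:ℝ) * r^(M-1)) ≤ r * ((2*Real.sqrt 2)^(M-1)) := by
    calc r * ((T.card:ℝ) * r^(M-1)) = (T.card:ℝ) * (r * r^(M-1)) := by ring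
      _ ≤ r * (2*Real.sqrt 2)^(M-1) := hcard
  have h6 := le_of_mul_le_mul_left h5 hr
  rw [div_pow, le_div_iff₀ hrpow]
  exact h6




lemma exists_net (M : ℕ) (hM : 3 ≤ M) {c r : ℝ} (hc0 : 0 < c) (hc1 : c ≤ 1)
    (hr : 0 < r) (hr2 : r ≤ 1/2) (hcr : (2*r)^2 = 2 - 2*c) :
    ∃ T : Finset (EuclideanSpace ℝ (Fin M)),
      (∀ v ∈ T, ‖v‖ = 1) ∧ (T.card : ℝ) ≤ (2*Real.sqrt 2 / r)^(M-1) ∧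
      ∀ u : EuclideanSpace ℝ (Fin M), ‖u‖ = 1 → ∃ v ∈ T, c ≤ (inner ℝ v u : ℝ) := by
  classical
  -- key conversion: low inner product implies separation
  have hconv : ∀ v w : EuclideanSpace ℝ (Fin M), ‖v‖ = 1 → ‖w‖ = 1 →
      (inner ℝ v w : ℝ) < c → 2*r < dist v w := by
    intro v w hv hw hvw
    have hd : dist v w ^ 2 = 2 - 2 * (inner ℝ v w : ℝ) := by
      rw [dist_eq_norm, norm_sub_sq_real, hv, hw]; ring
    by_contra h
    push_neg at h
    have h2 : dist v w ^ 2 ≤ (2*r)^2 := by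
      apply pow_le_pow_left₀ dist_nonneg h
    rw [hd, hcr] at h2
    linarith
  set P : Finset (EuclideanSpace ℝ (Fin M)) → Prop :=
    fun T => (∀ v ∈ T, ‖v‖ = 1) ∧ ∀ v ∈ T, ∀ w ∈ T, v ≠ w → 2*r < dist v w with hP
  set S : Set ℕ := {n | ∃ T, P T ∧ T.card = n} with hS
  have hne : S.Nonempty := ⟨0, ∅, ⟨by simp, by simp⟩, by simp⟩
  have hbdd : BddAbove S := by
    refine ⟨Nat.floor ((2*Real.sqrt 2 / r)^(M-1) : ℝ), fun n hn => ?_⟩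
    obtain ⟨T, ⟨hT1, hT2⟩, hT3⟩ := hn
    apply Nat.le_floor
    rw [← hT3]
    exact packing M hM hr hr2 T hT1 hT2
  obtain ⟨T, hPT, hcardT⟩ := Nat.sSup_mem hne hbdd
  refine ⟨T, hPT.1, ?_, ?_⟩
  · exact packing M hM hr hr2 T hPT.1 hPT.2
  · intro u hu
    by_contra hcon
    push_neg at hcon
    have huT : u ∉ T := by
      intro huT
      have := hcon u huT
      rw [real_inner_self_eq_norm_sq, hu] at this
      nlinarith
    have hP' : P (insert u T) := by
      constructor
      · intro v hv
        rcases Finset.mem_insert.mp hv with h | h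
        · rw [h]; exact hu
        · exact hPT.1 v h
      · intro v hv w hw hvw
        rcases Finset.mem_insert.mp hv with h | h <;>
          rcases Finset.mem_insert.mp hw with h' | h'
        · exact absurd (h.trans h'.symm) hvw
        · rw [h]
          have := hcon w h'
          rw [real_inner_comm] at this
          exact hconv u w hu (hPT.1 w h') this
        · rw [h']
          exact hconv v u (hPT.1 v h) hu (hcon v h)
        · exact hPT.2 v h w h' hvw
    have : T.card + 1 ∈ S := ⟨insert u T, hP', by rw [Finset.card_insert_of_notMem huT]⟩
    have hle := le_csSup hbdd this
    rw [hcardT] at hle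
    omega

def toE {M : ℕ} (w : Fin M → ℝ) : EuclideanSpace ℝ (Fin M) := WithLp.toLp 2 w

lemma edot_eq_inner {M : ℕ} (v w : Fin M → ℝ) :
    edot v w = (inner ℝ (toE v) (toE w) : ℝ) := by
  rw [PiLp.inner_apply]
  simp only [RCLike.inner_apply, starRingEnd_apply, star_trivial]
  exact Finset.sum_congr rfl fun i _ => mul_comm _ _

lemma enorm_eq {M : ℕ} (w : Fin M → ℝ) :
    ‖toE w‖ = Real.sqrt (∑ i, w i ^ 2) := by
  rw [EuclideanSpace.norm_eq]
  congr 1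
  exact Finset.sum_congr rfl fun i _ => by rw [Real.norm_eq_abs, sq_abs]; rfl

/-- approximation of the Euclidean ball of radius `t` by a polytope generated
by at most `(1 + ε⁻¹)^((M-1)/2) · 4^(M-1)` unit vectors. -/
theorem ball_approx_by_polytope (M : ℕ) (hM : 3 ≤ M) (ε t : ℝ)
    (hε : 0 < ε) (hε1 : ε ≤ 1) (ht : ε ≤ t) :
    ∃ 𝒱 : Finset (Fin M → ℝ),
      (∀ v ∈ 𝒱, ∑ i, v i ^ 2 = 1) ∧
      (𝒱.card : ℝ) ≤ (1 + ε⁻¹) ^ (((M : ℝ) - 1) / 2) * 4 ^ (M - 1) ∧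
      epoly 𝒱 (t / (1 + ε)) ⊆ eball M t ∧
      eball M t ⊆ epoly 𝒱 t := by
  have hε' : (0:ℝ) < 1 + ε := by linarith
  set c : ℝ := 1/(1+ε) with hc
  set δ : ℝ := Real.sqrt (2*ε/(1+ε)) with hδ
  set r : ℝ := δ/2 with hrdef
  have hδsq : δ^2 = 2*ε/(1+ε) := Real.sq_sqrt (by positivity)
  have hδpos : 0 < δ := Real.sqrt_pos.mpr (by positivity)
  have hδ1 : δ ≤ 1 := by
    rw [show (1:ℝ) = Real.sqrt 1 by simp]
    apply Real.sqrt_le_sqrt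
    rw [div_le_one hε']; linarith
  have hr : 0 < r := by positivity
  have hr2 : r ≤ 1/2 := by rw [hrdef]; linarith
  have hc0 : 0 < c := by positivity
  have hc1 : c ≤ 1 := by rw [hc, div_le_one hε']; linarith
  have hcr : (2*r)^2 = 2 - 2*c := by
    rw [hrdef, hc]
    have h2 : 2*(δ/2) = δ := by ring
    rw [h2, hδsq]
    field_simp
    ring
  obtain ⟨T, hT1, hT2, hT3⟩ := exists_net M hM hc0 hc1 hr hr2 hcr
  obtain ⟨T, hT1, hT2, hT3⟩ : ∃ T : Finset (Fin M → ℝ), (∀ v ∈ T, ‖toE v‖ = 1) ∧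
      (T.card : ℝ) ≤ (2*Real.sqrt 2 / r)^(M-1) ∧
      ∀ u : EuclideanSpace ℝ (Fin M), ‖u‖ = 1 → ∃ v ∈ T, c ≤ inner ℝ (toE v) u := by
    refine ⟨T.image WithLp.ofLp, ?_, ?_, ?_⟩
    · simp only [Finset.mem_image]; rintro _ ⟨v, hv, rfl⟩; exact hT1 v hv
    · rw [Finset.card_image_of_injective _ (WithLp.ofLp_injective 2)]; exact hT2
    · intro u hu; obtain ⟨v, hv, h⟩ := hT3 u hu; exact ⟨v.ofLp, Finset.mem_image_of_mem _ hv, h⟩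
  refine ⟨T, ?_, ?_, ?_, ?_⟩
  · intro v hv
    have h2 : edot v v = 1 := by
      rw [edot_eq_inner, real_inner_self_eq_norm_sq]
      have h3 : ‖toE v‖ = 1 := hT1 v hv
      rw [h3]; norm_num
    rw [← h2, edot]
    exact Finset.sum_congr rfl fun i _ => by ring
  · -- cardinality
    refine le_trans hT2 (le_of_eq ?_)
    have hδne : δ ≠ 0 := hδpos.ne'
    have e1 : (2:ℝ)*Real.sqrt 2 / r = 4 * (Real.sqrt 2 / δ) := by
      rw [hrdef]; field_simp; ring
    have e2 : Real.sqrt 2 / δ = Real.sqrt (1 + ε⁻¹) := by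
      rw [hδ, ← Real.sqrt_div (by norm_num)]
      congr 1
      field_simp
      ring
    rw [e1, e2, mul_pow]
    have hMc : ((M:ℝ) - 1) = ((M-1 : ℕ) : ℝ) := by
      push_cast [Nat.cast_sub (by omega : 1 ≤ M)]; ring
    rw [hMc]
    have hx : (0:ℝ) ≤ 1 + ε⁻¹ := by positivity
    rw [show (((M-1:ℕ) : ℝ))/2 = (1/2 : ℝ) * ((M-1:ℕ):ℝ) by ring]
    rw [Real.rpow_mul hx, Real.rpow_natCast, ← Real.sqrt_eq_rpow]
    ring
  · -- epoly ⊆ eball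
    intro w hw
    simp only [epoly, Set.mem_setOf_eq] at hw
    show Real.sqrt (∑ i, w i ^ 2) ≤ t
    rw [← enorm_eq w]
    rcases eq_or_ne ‖toE w‖ 0 with h0 | h0
    · rw [h0]; linarith
    · have hWpos : 0 < ‖toE w‖ := lt_of_le_of_ne (norm_nonneg _) (Ne.symm h0)
      have hun : ‖(‖toE w‖⁻¹ • toE w)‖ = 1 := by
        rw [norm_smul, norm_inv, norm_norm, inv_mul_cancel₀ h0]
      obtain ⟨v, hv, hvu⟩ := hT3 _ hun
      rw [real_inner_smul_right] at hvu
      have hvw : (inner ℝ (toE v) (toE w) : ℝ) ≤ t/(1+ε) := by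
        have h4 : edot v w ≤ t/(1+ε) := hw v hv
        rw [edot_eq_inner] at h4
        exact h4
      have h5 : c * ‖toE w‖ ≤ t * c := by
        calc c * ‖toE w‖ ≤ (‖toE w‖⁻¹ * (inner ℝ (toE v) (toE w) : ℝ)) * ‖toE w‖ :=
              mul_le_mul_of_nonneg_right hvu (norm_nonneg _)
          _ = (inner ℝ (toE v) (toE w) : ℝ) := by field_simp
          _ ≤ t/(1+ε) := hvw
          _ = t * c := by rw [hc]; ring
      have h6 : c * ‖toE w‖ ≤ c * t := by linarith
      exact le_of_mul_le_mul_left h6 hc0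
  · -- eball ⊆ epoly
    intro w hw v hv
    have hwn : ‖toE w‖ ≤ t := by rw [enorm_eq]; exact hw
    have hv1 : ‖toE v‖ = 1 := hT1 v hv
    rw [edot_eq_inner]
    calc (inner ℝ (toE v) (toE w) : ℝ) ≤ ‖toE v‖ * ‖toE w‖ := real_inner_le_norm _ _
      _ = ‖toE w‖ := by rw [hv1, one_mul]
      _ ≤ t := hwn
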